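/- Let G be a directed graph and ψ a cycle pattern parity-induced by a priority function w : E → ℤ (ψ(C) = + if the largest priority on C is even, ψ(C) = − if it is odd). Then for every nonempty subset S ⊆ E of edges, there exists an edge e ∈ S such that all directed simple cycles C with e ∈ C and C ⊆ S receive the same sign under ψ. -/

import Mathlib

/-- A directed simple cycle in a digraph given by source and target maps. -/
def IsCycle {V E : Type*} (src tgt : E → V) (es : List E) : Prop :=
  es ≠ [] ∧ es.Chain' (fun e f => tgt e = src f) ∧
    (∀ h : es ≠ [], tgt (es.getLast h) = src (es.head h)) ∧
    (es.map src).Nodup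

theorem stmt6 {V E : Type*} [Fintype E] (src tgt : E → V) (w : E → ℤ)
    (ψ : List E → SignType)
    (hψ : ∀ es (m : ℤ), IsCycle src tgt es → (es.map w).maximum = (m : WithBot ℤ) →
      ψ es = if Even m then 1 else -1) :
    ∀ S : Finset E, S.Nonempty → ∃ e ∈ S,
      ∀ C₁ C₂, IsCycle src tgt C₁ → IsCycle src tgt C₂ → e ∈ C₁ → e ∈ C₂ →
        (∀ f ∈ C₁, f ∈ S) → (∀ f ∈ C₂, f ∈ S) → ψ C₁ = ψ C₂ := by
  intro S hS
  obtain ⟨e, heS, hmax⟩ := S.exists_max_image w hS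
  refine ⟨e, heS, fun C₁ C₂ h₁ h₂ he₁ he₂ hsub₁ hsub₂ => ?_⟩
  have key : ∀ C, IsCycle src tgt C → e ∈ C → (∀ f ∈ C, f ∈ S) →
      ψ C = if Even (w e) then 1 else -1 := by
    intro C hC heC hsub
    refine hψ C (w e) hC ?_
    rw [List.maximum_eq_coe_iff]
    constructor
    · exact List.mem_map_of_mem heC
    · intro a ha
      obtain ⟨f, hf, rfl⟩ := List.mem_map.mp ha
      exact hmax f (hsub f hf)
  rw [key C₁ h₁ he₁ hsub₁, key C₂ h₂ he₂ hsub₂]
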